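/- (Second-order differential equation for the Sobolev orthogonal polynomials.) For every n ≥ 1 one has s_n + χ·Δ(Δs_n) = Δp_{n+1} + (⟨f_{n+1}, s_n⟩_S/‖p_n‖₂²)·Δp_n + (‖s_n‖_S²/‖p_{n−1}‖₂²)·Δp_{n−1}. -/
import Mathlib


open Filter RealInnerProductSpace

variable {H : Type*} [NormedAddCommGroup H] [InnerProductSpace ℝ H]

/-- `Wlt P n` is the span of `P 0, …, P (n-1)`; thus `Wlt P 0 = ⊥ = W_{-1}` and
`Wlt P (n+1)` is the space `W_n = span{P_0, …, P_n}`. -/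
def Wlt (P : ℕ → H) (n : ℕ) : Submodule ℝ H := Submodule.span ℝ (P '' Set.Iio n)

/-- `Wtot P` is the space `W = ⋃ₙ Wₙ` of all polynomials. -/
def Wtot (P : ℕ → H) : Submodule ℝ H := Submodule.span ℝ (Set.range P)

/-- The Sobolev inner product `⟨f, g⟩_S = ⟨f, g⟩₂ + χ⟨Δf, Δg⟩₂`. -/
noncomputable def innerS (Δ : H →ₗ[ℝ] H) (χ : ℝ) (f g : H) : ℝ :=
  ⟪ f, g ⟫ + χ * ⟪ Δ f, Δ g ⟫

/-- The Sobolev norm `‖f‖_S = √(‖f‖₂² + χ‖Δf‖₂²)`. -/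
noncomputable def normS (Δ : H →ₗ[ℝ] H) (χ : ℝ) (f : H) : ℝ :=
  Real.sqrt (‖f‖ ^ 2 + χ * ‖Δ f‖ ^ 2)

section Aux

variable {P : ℕ → H}

lemma Wlt_mono {m n : ℕ} (h : m ≤ n) : Wlt P m ≤ Wlt P n :=
  Submodule.span_mono (Set.image_mono (fun _ hx => lt_of_lt_of_le hx h))

lemma P_mem_Wlt {n m : ℕ} (h : n < m) : P n ∈ Wlt P m :=
  Submodule.subset_span ⟨n, h, rfl⟩

lemma Wlt_le_Wtot (n : ℕ) : Wlt P n ≤ Wtot P :=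
  Submodule.span_mono (Set.image_subset_range _ _)

lemma Wlt_zero : Wlt P 0 = ⊥ := by
  have : Set.Iio (0:ℕ) = ∅ := by ext x; simp
  simp [Wlt, this]

lemma mem_Wlt_succ {x : H} {n : ℕ} :
    x ∈ Wlt P (n+1) ↔ ∃ t : ℝ, ∃ w ∈ Wlt P n, x = t • P n + w := by
  have hIio : Set.Iio (n+1) = insert n (Set.Iio n) := by
    ext x; simp only [Set.mem_Iio, Set.mem_insert_iff]; omega
  rw [Wlt, hIio, Set.image_insert_eq, Submodule.mem_span_insert]
  constructor
  · rintro ⟨t, z, hz, rfl⟩; exact ⟨t, z, hz, rfl⟩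
  · rintro ⟨t, w, hw, rfl⟩; exact ⟨t, w, hw, rfl⟩

lemma smul_P_eq_zero (hP : LinearIndependent ℝ P) {t : ℝ} {n : ℕ}
    (h : t • P n ∈ Wlt P n) : t = 0 := by
  by_contra ht
  have : P n ∈ Wlt P n := by
    have := (Wlt P n).smul_mem t⁻¹ h
    rwa [smul_smul, inv_mul_cancel₀ ht, one_smul] at this
  exact hP.notMem_span_image (by simp) this

lemma Δ_mem_Wlt (Δ : H →ₗ[ℝ] H) (hΔ0 : Δ (P 0) = 0)
    (hΔsucc : ∀ n, Δ (P (n + 1)) = P n) {n : ℕ} {x : H}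
    (hx : x ∈ Wlt P (n+1)) : Δ x ∈ Wlt P n := by
  induction hx using Submodule.span_induction with
  | mem y hy =>
      obtain ⟨j, hj, rfl⟩ := hy
      cases j with
      | zero => simp [hΔ0]
      | succ k => rw [hΔsucc]; exact P_mem_Wlt (Nat.lt_of_succ_lt_succ hj)
  | zero => simp
  | add y z _ _ hy hz => rw [map_add]; exact add_mem hy hz
  | smul t y _ hy => rw [map_smul]; exact Submodule.smul_mem _ _ hy

/-- Monic-ness of `g` when `Δ g = q` with `q` monic of degree `n` and `g ∈ W_{n+1}`. -/
lemma G_monic (hP : LinearIndependent ℝ P) (Δ : H →ₗ[ℝ] H) (hΔ0 : Δ (P 0) = 0)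
    (hΔsucc : ∀ n, Δ (P (n + 1)) = P n) {n : ℕ} {g q : H}
    (hg : g ∈ Wlt P (n+2)) (hΔg : Δ g = q) (hq : q - P n ∈ Wlt P n) :
    g - P (n+1) ∈ Wlt P (n+1) := by
  obtain ⟨t, w, hw, rfl⟩ := mem_Wlt_succ.mp hg
  have hΔw : Δ w ∈ Wlt P n := Δ_mem_Wlt Δ hΔ0 hΔsucc hw
  have hΔg' : t • P n + Δ w = q := by rw [← hΔg, map_add, map_smul, hΔsucc]
  have hmem : (t - 1) • P n ∈ Wlt P n := by
    have heq : (t - 1) • P n = (q - P n) - Δ w := by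
      rw [sub_smul, one_smul, ← hΔg']; abel
    rw [heq]; exact sub_mem hq hΔw
  have ht : t = 1 := by
    have := smul_P_eq_zero hP hmem; linarith
  subst ht
  simpa using hw

lemma monic_mem {p : ℕ → H} (hpmonic : ∀ n, p n - P n ∈ Wlt P n) (n : ℕ) :
    p n ∈ Wlt P (n+1) := by
  have : p n = (p n - P n) + P n := by abel
  rw [this]
  exact add_mem (Wlt_mono (Nat.le_succ n) (hpmonic n)) (P_mem_Wlt (Nat.lt_succ_self n))

lemma p_ne_zero (hP : LinearIndependent ℝ P) {p : ℕ → H}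
    (hpmonic : ∀ n, p n - P n ∈ Wlt P n) (n : ℕ) : p n ≠ 0 := by
  intro h
  have : P n ∈ Wlt P n := by
    have := Submodule.neg_mem _ (hpmonic n)
    rw [h] at this; simpa using this
  exact hP.notMem_span_image (by simp) this

lemma normsq_ne_zero (hP : LinearIndependent ℝ P) {p : ℕ → H}
    (hpmonic : ∀ n, p n - P n ∈ Wlt P n) (n : ℕ) : ‖p n‖ ^ 2 ≠ 0 := by
  simpa using p_ne_zero hP hpmonic n

lemma p_ortho {p : ℕ → H} (hpmonic : ∀ n, p n - P n ∈ Wlt P n)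
    (hportho : ∀ n, ∀ w ∈ Wlt P n, ⟪ p n, w ⟫ = 0) {i j : ℕ} (h : i ≠ j) :
    ⟪ p i, p j ⟫ = 0 := by
  rcases Nat.lt_or_ge j i with hlt | hge
  · exact hportho i (p j) (Wlt_mono hlt (monic_mem hpmonic j))
  · rw [real_inner_comm]
    exact hportho j (p i) (Wlt_mono (lt_of_le_of_ne hge h) (monic_mem hpmonic i))

/-- If `v ∈ W_{n-1}` is orthogonal to all `p j`, `j < n`, then `v = 0`. -/
lemma ortho_zero (hP : LinearIndependent ℝ P) {p : ℕ → H}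
    (hpmonic : ∀ n, p n - P n ∈ Wlt P n)
    (hportho : ∀ n, ∀ w ∈ Wlt P n, ⟪ p n, w ⟫ = 0) :
    ∀ n, ∀ v ∈ Wlt P n, (∀ j, j < n → ⟪ p j, v ⟫ = 0) → v = 0 := by
  intro n
  induction n with
  | zero =>
      intro v hv _
      have : Set.Iio (0:ℕ) = ∅ := by ext x; simp
      simpa [Wlt, this] using hv
  | succ n ih =>
      intro v hv hvo
      obtain ⟨t, w, hw, rfl⟩ := mem_Wlt_succ.mp hv
      have hsub : t • P n + w - t • p n ∈ Wlt P n := by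
        have : t • P n + w - t • p n = w - t • (p n - P n) := by
          rw [smul_sub]; abel
        rw [this]
        exact sub_mem hw (Submodule.smul_mem _ _ (hpmonic n))
      have h1 : ⟪ p n, t • P n + w - t • p n ⟫ = 0 := hportho n _ hsub
      have h2 : ⟪ p n, t • P n + w ⟫ = 0 := hvo n (Nat.lt_succ_self n)
      have h3 : t * ⟪ p n, p n ⟫ = 0 := by
        rw [inner_sub_right, h2, real_inner_smul_right] at h1; linarith
      have ht : t = 0 := by
        rcases mul_eq_zero.mp h3 with h | h
        · exact h
        · exact absurd ((inner_self_eq_zero (𝕜 := ℝ)).mp h) (p_ne_zero hP hpmonic n)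
      subst ht
      rw [zero_smul, zero_add] at *
      exact ih w hw (fun j hj => hvo j (Nat.lt_succ_of_lt hj))

end Aux

/-- Second-order differential equation: for `n ≥ 1`, `s_n + χΔ²s_n = Δp_{n+1} + (⟨f_{n+1}, s_n⟩_S/‖p_n‖₂²)Δp_n + (‖s_n‖_S²/‖p_{n−1}‖₂²)Δp_{n−1}`. -/
theorem statement6
    (P : ℕ → H) (hP : LinearIndependent ℝ P)
    (Δ G : H →ₗ[ℝ] H)
    (hΔ0 : Δ (P 0) = 0) (hΔsucc : ∀ n, Δ (P (n + 1)) = P n)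
    (hGsym : ∀ u ∈ Wtot P, ∀ v ∈ Wtot P, ⟪ G u, v ⟫ = ⟪ u, G v ⟫)
    (hGinv : ∀ u ∈ Wtot P, Δ (G u) = u)
    (hGmap : ∀ n, ∀ u ∈ Wlt P (n + 1), G u ∈ Wlt P (n + 2))
    (χ : ℝ) (hχ : 0 < χ)
    (p : ℕ → H)
    (hpmonic : ∀ n, p n - P n ∈ Wlt P n)
    (hportho : ∀ n, ∀ w ∈ Wlt P n, ⟪ p n, w ⟫ = 0)
    (s : ℕ → H)
    (hsmonic : ∀ n, s n - P n ∈ Wlt P n)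
    (hsortho : ∀ n, ∀ w ∈ Wlt P n, innerS Δ χ (s n) w = 0)
    : ∀ n, 1 ≤ n →
      s n + χ • Δ (Δ (s n)) = Δ (p (n + 1))
        + (innerS Δ χ (G (p n)) (s n) / ‖p n‖ ^ 2) • Δ (p n)
        + ((‖s n‖ ^ 2 + χ * ‖Δ (s n)‖ ^ 2) / ‖p (n - 1)‖ ^ 2) • Δ (p (n - 1)) := by
  intro n hn
  obtain ⟨m, rfl⟩ : ∃ m, n = m + 1 := ⟨n - 1, (Nat.succ_pred_eq_of_pos hn).symm⟩
  simp only [Nat.add_sub_cancel]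
  show s (m+1) + χ • Δ (Δ (s (m+1))) = Δ (p (m+2))
        + (innerS Δ χ (G (p (m+1))) (s (m+1)) / ‖p (m+1)‖ ^ 2) • Δ (p (m+1))
        + ((‖s (m+1)‖ ^ 2 + χ * ‖Δ (s (m+1))‖ ^ 2) / ‖p m‖ ^ 2) • Δ (p m)
  have hWtot : ∀ k, ∀ x ∈ Wlt P k, x ∈ Wtot P := fun k x hx => Wlt_le_Wtot k hx
  have hsmem : s (m+1) ∈ Wlt P (m+2) := monic_mem hsmonic (m+1)
  have hpmem : ∀ k, p k ∈ Wlt P (k+1) := monic_mem hpmonic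
  have hΔs : Δ (s (m+1)) ∈ Wlt P (m+1) := Δ_mem_Wlt Δ hΔ0 hΔsucc hsmem
  have hGs : G (s (m+1)) ∈ Wlt P (m+3) := hGmap (m+1) _ hsmem
  set a := innerS Δ χ (G (p (m+1))) (s (m+1)) / ‖p (m+1)‖ ^ 2 with ha
  set b := (‖s (m+1)‖ ^ 2 + χ * ‖Δ (s (m+1))‖ ^ 2) / ‖p m‖ ^ 2 with hb
  set u := G (s (m+1)) + χ • Δ (s (m+1)) with hu
  set v := u - p (m+2) - a • p (m+1) - b • p m with hv
  -- v ∈ W_{m+1}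
  have hGsmonic : G (s (m+1)) - P (m+2) ∈ Wlt P (m+2) :=
    G_monic hP Δ hΔ0 hΔsucc hGs (hGinv _ (hWtot _ _ hsmem)) (hsmonic (m+1))
  have hvmem : v ∈ Wlt P (m+2) := by
    have h1 : v = ((G (s (m+1)) - P (m+2)) + χ • Δ (s (m+1)))
        - (p (m+2) - P (m+2)) - a • p (m+1) - b • p m := by
      rw [hv, hu]; abel
    rw [h1]
    refine sub_mem (sub_mem (sub_mem (add_mem hGsmonic ?_) (hpmonic (m+2))) ?_) ?_
    · exact Submodule.smul_mem _ _ (Wlt_mono (Nat.le_succ _) hΔs)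
    · exact Submodule.smul_mem _ _ (hpmem (m+1))
    · exact Submodule.smul_mem _ _ (Wlt_mono (Nat.le_succ _) (hpmem m))
  -- key computation
  have hkey : ∀ j, ⟪ p j, u ⟫ = innerS Δ χ (G (p j)) (s (m+1)) := by
    intro j
    have h1 : ⟪ p j, G (s (m+1)) ⟫ = ⟪ G (p j), s (m+1) ⟫ :=
      (hGsym (p j) (hWtot _ _ (hpmem j)) (s (m+1)) (hWtot _ _ hsmem)).symm
    have h2 : Δ (G (p j)) = p j := hGinv _ (hWtot _ _ (hpmem j))
    rw [hu, inner_add_right, real_inner_smul_right, innerS, h1, h2]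
  have hSsymm : ∀ f g : H, innerS Δ χ f g = innerS Δ χ g f := by
    intro f g; simp only [innerS, real_inner_comm]
  have hpo : ∀ i k : ℕ, i ≠ k → ⟪ p i, p k ⟫ = 0 := fun i k h => p_ortho hpmonic hportho h
  -- orthogonality of v against p j for 1 ≤ j ≤ m+1
  have hvo : ∀ j, 1 ≤ j → j < m + 2 → ⟪ p j, v ⟫ = 0 := by
    intro j hj1 hj2
    have hexp : ⟪ p j, v ⟫ = ⟪ p j, u ⟫ - ⟪ p j, p (m+2) ⟫
        - a * ⟪ p j, p (m+1) ⟫ - b * ⟪ p j, p m ⟫ := by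
      rw [hv]
      simp only [inner_sub_right, real_inner_smul_right]
    by_cases hjm1 : j = m + 1
    · subst hjm1
      rw [hexp, hkey, hpo (m+1) (m+2) (by omega), hpo (m+1) m (by omega),
        real_inner_self_eq_norm_sq, ha, div_mul_cancel₀ _ (normsq_ne_zero hP hpmonic (m+1))]
      ring
    · by_cases hjm : j = m
      · subst hjm
        have hGpm_monic : G (p j) - P (j+1) ∈ Wlt P (j+1) :=
          G_monic hP Δ hΔ0 hΔsucc (hGmap j _ (hpmem j)) (hGinv _ (hWtot _ _ (hpmem j)))
            (hpmonic j)
        have hdiff : G (p j) - s (j+1) ∈ Wlt P (j+1) := by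
          have : G (p j) - s (j+1) = (G (p j) - P (j+1)) - (s (j+1) - P (j+1)) := by abel
          rw [this]; exact sub_mem hGpm_monic (hsmonic (j+1))
        have h0 : innerS Δ χ (s (j+1)) (G (p j) - s (j+1)) = 0 := hsortho (j+1) _ hdiff
        have h1 : innerS Δ χ (s (j+1)) (G (p j))
            = ‖s (j+1)‖ ^ 2 + χ * ‖Δ (s (j+1))‖ ^ 2 := by
          simp only [innerS, map_sub, inner_sub_right] at h0
          simp only [innerS]
          rw [← real_inner_self_eq_norm_sq, ← real_inner_self_eq_norm_sq]
          linarith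
        rw [hexp, hkey, hSsymm, h1, hpo j (j+2) (by omega), hpo j (j+1) (by omega),
          real_inner_self_eq_norm_sq, hb, div_mul_cancel₀ _ (normsq_ne_zero hP hpmonic j)]
        ring
      · have hGpj : G (p j) ∈ Wlt P (m+1) :=
          Wlt_mono (by omega) (hGmap j _ (hpmem j))
        have h0 : innerS Δ χ (G (p j)) (s (m+1)) = 0 := by
          rw [hSsymm]; exact hsortho (m+1) _ hGpj
        rw [hexp, hkey, h0, hpo j (m+2) (by omega), hpo j (m+1) (by omega),
          hpo j m (by omega)]
        ring
  -- kernel argument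
  set c := ⟪ p 0, v ⟫ / ‖p 0‖ ^ 2 with hc
  have hw0 : v - c • p 0 = 0 := by
    refine ortho_zero hP hpmonic hportho (m+2) _ ?_ ?_
    · exact sub_mem hvmem (Submodule.smul_mem _ _ (Wlt_mono (by omega) (hpmem 0)))
    · intro j hj
      rcases Nat.eq_zero_or_pos j with hj0 | hj1
      · subst hj0
        rw [inner_sub_right, real_inner_smul_right, real_inner_self_eq_norm_sq, hc,
          div_mul_cancel₀ _ (normsq_ne_zero hP hpmonic 0), sub_self]
      · rw [inner_sub_right, real_inner_smul_right, hvo j hj1 hj, hpo _ _ (by omega)]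
        ring
  have hveq : v = c • p 0 := by rwa [sub_eq_zero] at hw0
  have hp0 : p 0 = P 0 := by
    have h := hpmonic 0
    rw [Wlt_zero, Submodule.mem_bot, sub_eq_zero] at h
    exact h
  have hΔv : Δ v = 0 := by rw [hveq, map_smul, hp0, hΔ0, smul_zero]
  have hΔvexp : Δ u - Δ (p (m+2)) - a • Δ (p (m+1)) - b • Δ (p m) = 0 := by
    rw [← hΔv, hv]
    simp only [map_sub, map_smul]
  have hΔu : Δ u = s (m+1) + χ • Δ (Δ (s (m+1))) := by
    rw [hu, map_add, map_smul, hGinv _ (hWtot _ _ hsmem)]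
  rw [← hΔu, ← sub_eq_zero,
    show Δ u - (Δ (p (m+2)) + a • Δ (p (m+1)) + b • Δ (p m))
      = Δ u - Δ (p (m+2)) - a • Δ (p (m+1)) - b • Δ (p m) from by abel]
  exact hΔvexp
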